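/- Let u_k : ℝ^N × ℝ → ℝ be a sequence of upper semicontinuous functions which is locally uniformly bounded, and define the upper half-relaxed limit u(x, t) := lim_{j→∞} sup{u_k(y, s) : k ≥ j, |y − x| ≤ 1/j, |s − t| ≤ 1/j}. Let r_k : ℝ → [0, ∞) be continuous functions converging locally uniformly to a (continuous, nonnegative) function r. Then for every (x, t) ∈ ℝ^N × ℝ, the equality sup_{y ∈ closedBall(x, r(t))} u(y, t) = lim_{j→∞} sup{ sup_{η ∈ closedBall(ξ, r_k(s))} u_k(η, s) : k ≥ j, |ξ − x| ≤ 1/j, |s − t| ≤ 1/j } holds; that is, the sup-convolution of the upper half-relaxed limit over the closed ball of radius r(t) equals the upper half-relaxed limit of the sup-convolutions over the closed balls of radii r_k. -/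

import Mathlib

open scoped RealInnerProductSpace
open Metric Set MeasureTheory

noncomputable section

abbrev E (N : ℕ) := EuclideanSpace ℝ (Fin N)

variable {N : ℕ}

/-- Reflection across the hyperplane `Π_p(s) = {x | x·p = s}`. -/
def reflect (p : E N) (s : ℝ) (x : E N) : E N := x - (2 * (⟪x, p⟫ - s)) • p

/-- Reflection across the hyperplane through the origin orthogonal to `p`. -/
def reflect0 (p : E N) : E N → E N := reflect p 0

/-- A finite root system of unit vectors. -/
def IsRootSystem (P : Set (E N)) : Prop :=
  P.Finite ∧ (∀ p ∈ P, ‖p‖ = 1) ∧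
  (∀ p ∈ P, {q | q ∈ P ∧ ∃ c : ℝ, q = c • p} = {p, -p}) ∧
  (∀ p ∈ P, reflect0 p '' P = P)

/-- Condition (EA): for every hyperplane through the origin (with normal `v ≠ 0`),
the part of `P` outside the hyperplane spans `ℝ^N`. -/
def CondEA (P : Set (E N)) : Prop :=
  ∀ v : E N, v ≠ 0 → Submodule.span ℝ {p | p ∈ P ∧ ⟪p, v⟫ ≠ 0} = ⊤

/-- The reflection property (RP) with respect to `P` and `ρ`. -/
def ReflProp (P : Set (E N)) (ρ : ℝ) (Ω : Set (E N)) : Prop :=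
  ∀ p ∈ P, ∀ s > ρ,
    reflect p s '' Ω ∩ {x | ⟪x, p⟫ < s} ⊆ Ω ∩ {x | ⟪x, p⟫ < s}

/-- `v` enumerates a basis of `ℝ^N` consisting of elements of `P`. -/
def BasisIn (P : Set (E N)) (v : Fin N → E N) : Prop :=
  (∀ i, v i ∈ P) ∧ LinearIndependent ℝ v ∧ Submodule.span ℝ (Set.range v) = ⊤

/-- The open cone `Co_r(A)` generated by a basis. -/
def Cone (r : ℝ) (v : Fin N → E N) : Set (E N) :=
  {x | ∃ a : Fin N → ℝ, (∀ i, 0 < a i) ∧ (∑ i, a i) < r ∧ x = ∑ i, a i • v i}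

/-- `σ₁(P)`. -/
def sigma1 (P : Set (E N)) : ℝ :=
  sInf {s | ∃ p₁ ∈ P, s = sSup {t | ∃ v : Fin N → E N, BasisIn P v ∧
    t = sInf (Set.range fun i => |⟪v i, p₁⟫|)}}

/-- `σ₂(P)`. -/
def sigma2 (P : Set (E N)) : ℝ :=
  sSup {t | ∃ x : E N, (∀ p ∈ P, |⟪p, x⟫| ≤ 1) ∧ t = ‖x‖}

/-- `σ₃(P)`. -/
def sigma3 (P : Set (E N)) : ℝ :=
  sInf {s | ∃ v : Fin N → E N, BasisIn P v ∧
    s = sSup {r | 0 < r ∧ ball ((1 / (2 * (N : ℝ))) • ∑ i, v i) r ⊆ Cone 1 v}}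

/-- The upper half-relaxed limit (limsup-star) of a sequence of functions on
`ℝ^N × ℝ`: the limit as `j → ∞` of the (nonincreasing, for `j ≥ 1`) sequence of
suprema over `k ≥ j`, `|y - x| ≤ 1/j`, `|s - t| ≤ 1/j`; here indexed by `j + 1`. -/
def limsupStar (u : ℕ → E N × ℝ → ℝ) (x : E N) (t : ℝ) : ℝ :=
  ⨅ j : ℕ, sSup {a | ∃ k, j + 1 ≤ k ∧ ∃ y : E N, ∃ s : ℝ,
    ‖y - x‖ ≤ 1 / (j + 1 : ℝ) ∧ |s - t| ≤ 1 / (j + 1 : ℝ) ∧ a = u k (y, s)}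

lemma exists_midpoint {N : ℕ} (x η : E N) (A B : ℝ) (hA : 0 ≤ A) (hB : 0 ≤ B)
    (h : ‖η - x‖ ≤ A + B) : ∃ ξ : E N, ‖η - ξ‖ ≤ A ∧ ‖ξ - x‖ ≤ B := by
  by_cases hd : ‖η - x‖ ≤ B
  · exact ⟨η, by simpa using hA, hd⟩
  · push_neg at hd
    set d := ‖η - x‖ with hdd
    have hd0 : 0 < d := lt_of_le_of_lt hB hd
    refine ⟨x + (B / d) • (η - x), ?_, ?_⟩
    · have he : η - (x + (B / d) • (η - x)) = (1 - B / d) • (η - x) := by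
        rw [sub_smul, one_smul]; abel
      rw [he, norm_smul, Real.norm_eq_abs,
        abs_of_nonneg (sub_nonneg.2 ((div_le_one hd0).2 hd.le))]
      have hcalc : (1 - B / d) * d = d - B := by field_simp
      rw [← hdd, hcalc]; linarith
    · have he : x + (B / d) • (η - x) - x = (B / d) • (η - x) := by abel
      rw [he, norm_smul, Real.norm_eq_abs, abs_of_nonneg (div_nonneg hB hd0.le), ← hdd]
      field_simp
      exact le_rfl


/-- the sup-convolution over the closed ball of radius `r(t)` of the
upper half-relaxed limit equals the upper half-relaxed limit of the sup-convolutions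
over closed balls of radii `r_k`. -/
theorem supConvolution_limsupStar (N : ℕ) (hN : 1 ≤ N) (u : ℕ → E N × ℝ → ℝ)
    (husc : ∀ k, UpperSemicontinuous (u k))
    (hbd : ∀ K : Set (E N × ℝ), IsCompact K → ∃ M > 0, ∀ k, ∀ z ∈ K, |u k z| ≤ M)
    (rk : ℕ → ℝ → ℝ) (hrkc : ∀ k, Continuous (rk k)) (hrknn : ∀ k t, 0 ≤ rk k t)
    (r : ℝ → ℝ) (hrc : Continuous r) (hrnn : ∀ t, 0 ≤ r t)
    (hconv : TendstoLocallyUniformly rk r Filter.atTop)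
    (x : E N) (t : ℝ) :
    sSup ((fun y => limsupStar u y t) '' closedBall x (r t)) =
      limsupStar
        (fun k z => sSup ((fun η => u k (η, z.2)) '' closedBall z.1 (rk k z.2))) x t := by
  -- basic helpers
  have hj1 : ∀ j : ℕ, (0:ℝ) < 1 / (j + 1 : ℝ) := fun j => by positivity
  have hj1le : ∀ j : ℕ, 1 / (j + 1 : ℝ) ≤ 1 := fun j => by
    rw [div_le_one (by positivity)]
    have h0 : (0:ℝ) ≤ (j:ℝ) := Nat.cast_nonneg j
    linarith
  have hmono : ∀ {a b : ℕ}, a ≤ b → 1 / ((b:ℝ) + 1) ≤ 1 / ((a:ℝ) + 1) := by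
    intro a b hab
    exact one_div_le_one_div_of_le (by positivity) (by exact_mod_cast Nat.succ_le_succ hab)
  have hIcc : ∀ s : ℝ, |s - t| ≤ 1 → s ∈ Set.Icc (t-1) (t+1) := fun s hs =>
    ⟨by linarith [(abs_le.1 hs).1], by linarith [(abs_le.1 hs).2]⟩
  have htri : ∀ a b c : E N, ‖a - c‖ ≤ ‖a - b‖ + ‖b - c‖ := fun a b c => by
    simpa [dist_eq_norm] using dist_triangle a b c
  -- uniform convergence on the compact interval
  have huni : TendstoUniformlyOn rk r Filter.atTop (Set.Icc (t-1) (t+1)) := by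
    rw [← tendstoLocallyUniformlyOn_iff_tendstoUniformlyOn_of_compact isCompact_Icc]
    exact (tendstoLocallyUniformlyOn_univ.2 hconv).mono (subset_univ _)
  have hunif : ∀ ε > (0:ℝ), ∃ K₁ : ℕ, ∀ k ≥ K₁, ∀ s ∈ Set.Icc (t-1) (t+1),
      |r s - rk k s| < ε := by
    intro ε hε
    have := Metric.tendstoUniformlyOn_iff.1 huni ε hε
    rw [Filter.eventually_atTop] at this
    obtain ⟨K₁, h⟩ := this
    exact ⟨K₁, fun k hk s hs => by have := h k hk s hs; rwa [Real.dist_eq] at this⟩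
  have hcont : ∀ ε > (0:ℝ), ∃ δ > (0:ℝ), ∀ s, |s - t| < δ → |r s - r t| < ε := by
    intro ε hε
    obtain ⟨δ, hδ, h⟩ := Metric.continuous_iff.1 hrc t ε hε
    exact ⟨δ, hδ, fun s hs => by
      have := h s (by rwa [Real.dist_eq]); rwa [Real.dist_eq] at this⟩
  -- a uniform bound R on the radii over the interval
  obtain ⟨K₀, hK₀⟩ := hunif 1 one_pos
  obtain ⟨Rr, hRr'⟩ := isCompact_Icc.bddAbove_image (hrc.continuousOn :
    ContinuousOn r (Set.Icc (t-1) (t+1)))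
  have hRr : ∀ s ∈ Set.Icc (t-1) (t+1), r s ≤ Rr := fun s hs => hRr' ⟨s, hs, rfl⟩
  have hfin : ∀ k : ℕ, ∃ B : ℝ, ∀ s ∈ Set.Icc (t-1) (t+1), rk k s ≤ B := by
    intro k
    obtain ⟨B, hB⟩ := isCompact_Icc.bddAbove_image ((hrkc k).continuousOn :
      ContinuousOn (rk k) (Set.Icc (t-1) (t+1)))
    exact ⟨B, fun s hs => hB ⟨s, hs, rfl⟩⟩
  choose B hB using hfin
  obtain ⟨R, hR, hrtR, hR0⟩ : ∃ R : ℝ, (∀ k, ∀ s ∈ Set.Icc (t-1) (t+1), rk k s ≤ R) ∧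
      r t ≤ R ∧ 0 ≤ R := by
    set R := max (Rr + 1) ((Finset.range (K₀+1)).sup' ⟨0, Finset.mem_range.2 (Nat.succ_pos _)⟩ B)
    have htmem : t ∈ Set.Icc (t-1) (t+1) := ⟨by linarith, by linarith⟩
    have hRk : ∀ k, ∀ s ∈ Set.Icc (t-1) (t+1), rk k s ≤ R := by
      intro k s hs
      rcases le_or_gt K₀ k with h | h
      · have := hK₀ k h s hs
        have h2 := hRr s hs
        have : rk k s ≤ r s + 1 := by
          have := (abs_lt.1 this).1; linarith
        exact le_trans this (le_trans (by linarith) (le_max_left _ _))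
      · refine le_trans (hB k s hs) (le_trans ?_ (le_max_right _ _))
        exact Finset.le_sup' B (Finset.mem_range.2 (by omega))
    refine ⟨R, hRk, ?_, le_trans (hrknn 0 t) (hRk 0 t htmem)⟩
    exact le_trans (hRr t htmem) (le_trans (by linarith) (le_max_left _ _))
  -- the uniform bound on u over a big compact set
  obtain ⟨M, hMpos, hM⟩ := hbd (closedBall x (R+2) ×ˢ Set.Icc (t-1) (t+1))
    ((isCompact_closedBall x _).prod isCompact_Icc)
  have hMu : ∀ k (η : E N) (s : ℝ), ‖η - x‖ ≤ R + 2 → |s - t| ≤ 1 → |u k (η, s)| ≤ M := by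
    intro k η s h1 h2
    exact hM k (η, s) ⟨mem_closedBall_iff_norm.2 h1, hIcc s h2⟩
  -- the sup-convolution sequence
  set v : ℕ → E N × ℝ → ℝ :=
    fun k z => sSup ((fun η => u k (η, z.2)) '' closedBall z.1 (rk k z.2)) with hvdef
  have hv_le : ∀ k (ξ : E N) (s : ℝ), ‖ξ - x‖ ≤ 2 → |s - t| ≤ 1 → v k (ξ, s) ≤ M := by
    intro k ξ s hξ hs
    apply Real.sSup_le _ hMpos.le
    rintro a ⟨η, hη, rfl⟩
    have h1 : ‖η - ξ‖ ≤ rk k s := mem_closedBall_iff_norm.1 hη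
    have h2 : rk k s ≤ R := hR k s (hIcc s hs)
    have h3 : ‖η - x‖ ≤ R + 2 := le_trans (htri η ξ x) (by linarith)
    exact (abs_le.1 (hMu k η s h3 hs)).2
  have hv_bdd : ∀ k (ξ : E N) (s : ℝ), ‖ξ - x‖ ≤ 2 → |s - t| ≤ 1 →
      BddAbove ((fun η => u k (η, s)) '' closedBall ξ (rk k s)) := by
    intro k ξ s hξ hs
    refine ⟨M, ?_⟩
    rintro a ⟨η, hη, rfl⟩
    have h1 : ‖η - ξ‖ ≤ rk k s := mem_closedBall_iff_norm.1 hη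
    have h2 : rk k s ≤ R := hR k s (hIcc s hs)
    have h3 : ‖η - x‖ ≤ R + 2 := le_trans (htri η ξ x) (by linarith)
    exact (abs_le.1 (hMu k η s h3 hs)).2
  have hv_ge : ∀ k (ξ : E N) (s : ℝ), ‖ξ - x‖ ≤ 2 → |s - t| ≤ 1 →
      u k (ξ, s) ≤ v k (ξ, s) := by
    intro k ξ s hξ hs
    exact le_csSup (hv_bdd k ξ s hξ hs) ⟨ξ, mem_closedBall_self (hrknn k s), rfl⟩
  -- the approximating sets
  set S : E N → ℕ → Set ℝ := fun y j => {a | ∃ k, j + 1 ≤ k ∧ ∃ η : E N, ∃ s : ℝ,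
    ‖η - y‖ ≤ 1 / (j + 1 : ℝ) ∧ |s - t| ≤ 1 / (j + 1 : ℝ) ∧ a = u k (η, s)} with hSdef
  set T : ℕ → Set ℝ := fun j => {a | ∃ k, j + 1 ≤ k ∧ ∃ ξ : E N, ∃ s : ℝ,
    ‖ξ - x‖ ≤ 1 / (j + 1 : ℝ) ∧ |s - t| ≤ 1 / (j + 1 : ℝ) ∧ a = v k (ξ, s)} with hTdef
  have hls_u : ∀ y : E N, limsupStar u y t = ⨅ j : ℕ, sSup (S y j) := fun y => rfl
  have hls_v : limsupStar v x t = ⨅ j : ℕ, sSup (T j) := rfl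
  have hS_ne : ∀ y j, (S y j).Nonempty := fun y j =>
    ⟨u (j+1) (y, t), j+1, le_rfl, y, t, by simpa using (hj1 j).le, by simpa using (hj1 j).le, rfl⟩
  have hT_ne : ∀ j, (T j).Nonempty := fun j =>
    ⟨v (j+1) (x, t), j+1, le_rfl, x, t, by simpa using (hj1 j).le, by simpa using (hj1 j).le, rfl⟩
  have hS_elem : ∀ (y : E N), ‖y - x‖ ≤ R + 1 → ∀ j, ∀ a ∈ S y j, a ≤ M := by
    rintro y hy j a ⟨k, hk, η, s, hη, hs, rfl⟩
    have h1 : ‖η - x‖ ≤ R + 2 :=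
      le_trans (htri η y x) (by have := le_trans hη (hj1le j); linarith)
    exact (abs_le.1 (hMu k η s h1 (le_trans hs (hj1le j)))).2
  have hS_bdd : ∀ (y : E N), ‖y - x‖ ≤ R + 1 → ∀ j, BddAbove (S y j) :=
    fun y hy j => ⟨M, fun a ha => hS_elem y hy j a ha⟩
  have hT_elem : ∀ j, ∀ a ∈ T j, a ≤ M := by
    rintro j a ⟨k, hk, ξ, s, hξ, hs, rfl⟩
    exact hv_le k ξ s (le_trans hξ (by linarith [hj1le j])) (le_trans hs (hj1le j))
  have hT_bdd : ∀ j, BddAbove (T j) := fun j => ⟨M, fun a ha => hT_elem j a ha⟩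
  have hS_low : ∀ (y : E N), ‖y - x‖ ≤ R + 1 → ∀ j, -M ≤ sSup (S y j) := by
    intro y hy j
    have h1 : -M ≤ u (j+1) (y, t) := by
      have := (abs_le.1 (hMu (j+1) y t (by linarith) (by simp))).1; linarith
    exact le_trans h1 (le_csSup (hS_bdd y hy j)
      ⟨j+1, le_rfl, y, t, by simpa using (hj1 j).le, by simpa using (hj1 j).le, rfl⟩)
  have hT_low : ∀ j, -M ≤ sSup (T j) := by
    intro j
    have h0 : ‖x - x‖ ≤ (2:ℝ) := by simp
    have h1 : -M ≤ u (j+1) (x, t) := by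
      have := (abs_le.1 (hMu (j+1) x t (by simpa using by linarith) (by simp))).1; linarith
    refine le_trans (le_trans h1 (hv_ge (j+1) x t h0 (by simp))) ?_
    exact le_csSup (hT_bdd j) ⟨j+1, le_rfl, x, t, by simpa using (hj1 j).le, by simpa using (hj1 j).le, rfl⟩
  have hu_le : ∀ (y : E N), ‖y - x‖ ≤ R + 1 → ∀ j, limsupStar u y t ≤ sSup (S y j) := by
    intro y hy j
    rw [hls_u y]
    exact ciInf_le ⟨-M, by rintro _ ⟨j, rfl⟩; exact hS_low y hy j⟩ j
  -- the two directions
  apply le_antisymm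
  · -- sup of limsupStar over the ball ≤ limsupStar of sup-convolutions
    apply csSup_le ((nonempty_closedBall.2 (hrnn t)).image _)
    rintro _ ⟨y, hy, rfl⟩
    have hyx : ‖y - x‖ ≤ r t := mem_closedBall_iff_norm.1 hy
    have hyR : ‖y - x‖ ≤ R + 1 := le_trans hyx (by linarith)
    rw [hls_v]
    apply le_ciInf
    intro j
    -- choose parameters
    set ε : ℝ := 1 / (2 * ((j:ℝ) + 1)) with hεdef
    have hε : 0 < ε := by positivity
    obtain ⟨K₁, hK₁⟩ := hunif (ε/2) (by positivity)
    obtain ⟨δ, hδ, hδc⟩ := hcont (ε/2) (by positivity)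
    obtain ⟨n₁, hn₁⟩ := exists_nat_one_div_lt hδ
    set j' : ℕ := max (max K₁ n₁) (max j (2*j+1)) with hj'def
    have hj'K₁ : K₁ ≤ j' := le_trans (le_max_left _ _) (le_max_left _ _)
    have hj'n₁ : n₁ ≤ j' := le_trans (le_max_right _ _) (le_max_left _ _)
    have hj'j : j ≤ j' := le_trans (le_max_left _ _) (le_max_right _ _)
    have hj'2j : 2*j+1 ≤ j' := le_trans (le_max_right _ _) (le_max_right _ _)
    have hδ' : 1 / ((j':ℝ) + 1) < δ := lt_of_le_of_lt (hmono hj'n₁) hn₁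
    have hε' : 1 / ((j':ℝ) + 1) ≤ ε := by
      refine le_trans (hmono hj'2j) ?_
      rw [hεdef]
      apply le_of_eq
      push_cast
      ring
    refine le_trans (hu_le y hyR j') (csSup_le (hS_ne y j') ?_)
    rintro a ⟨k, hk, η, s, hη, hs, rfl⟩
    have hsj : |s - t| ≤ 1 / ((j':ℝ) + 1) := hs
    have hs1 : |s - t| ≤ 1 := le_trans hsj (hj1le j')
    have hkK₁ : K₁ ≤ k := le_trans hj'K₁ (by omega)
    have h1 : |r s - rk k s| < ε/2 := hK₁ k hkK₁ s (hIcc s hs1)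
    have h2 : |r s - r t| < ε/2 := hδc s (lt_of_le_of_lt hsj hδ')
    have hrt : r t ≤ rk k s + ε := by
      have a1 := (abs_lt.1 h1).2
      have a2 := (abs_lt.1 h2).1
      linarith
    have hηx : ‖η - x‖ ≤ rk k s + 1 / ((j:ℝ) + 1) := by
      have := htri η y x
      have hεε : ε + ε = 1 / ((j:ℝ) + 1) := by
        have hj0 : ((j:ℝ) + 1) ≠ 0 := by positivity
        rw [hεdef]
        field_simp
        norm_num
      have : ‖η - x‖ ≤ 1 / ((j':ℝ) + 1) + r t := by linarith
      have := le_trans this (by linarith [hε'] : 1 / ((j':ℝ) + 1) + r t ≤ rk k s + (ε + ε))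
      linarith
    obtain ⟨ξ, hξ1, hξ2⟩ := exists_midpoint x η (rk k s) (1 / ((j:ℝ) + 1))
      (hrknn k s) (hj1 j).le hηx
    have hξ2' : ‖ξ - x‖ ≤ 2 := le_trans hξ2 (by linarith [hj1le j])
    have step1 : u k (η, s) ≤ v k (ξ, s) :=
      le_csSup (hv_bdd k ξ s hξ2' hs1) ⟨η, mem_closedBall_iff_norm.2 hξ1, rfl⟩
    refine le_trans step1 (le_csSup (hT_bdd j) ?_)
    exact ⟨k, le_trans (by omega) hk, ξ, s, hξ2, le_trans hsj (hmono hj'j), rfl⟩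
  · -- limsupStar of sup-convolutions ≤ sup of limsupStar over the ball
    set L : ℝ := sSup ((fun y => limsupStar u y t) '' closedBall x (r t)) with hLdef
    by_contra hcon
    push_neg at hcon
    set c : ℝ := (L + limsupStar v x t) / 2 with hcdef
    have hLc : L < c := by rw [hcdef]; linarith
    have hcV : c < limsupStar v x t := by rw [hcdef]; linarith
    -- extract witnesses
    have hwit : ∀ j : ℕ, ∃ k, j + 1 ≤ k ∧ ∃ ξ : E N, ∃ s : ℝ,
        ‖ξ - x‖ ≤ 1 / ((j:ℝ) + 1) ∧ |s - t| ≤ 1 / ((j:ℝ) + 1) ∧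
        ∃ η : E N, ‖η - ξ‖ ≤ rk k s ∧ c < u k (η, s) := by
      intro j
      have hTj : c < sSup (T j) := by
        refine lt_of_lt_of_le hcV ?_
        rw [hls_v]
        exact ciInf_le ⟨-M, by rintro _ ⟨i, rfl⟩; exact hT_low i⟩ j
      obtain ⟨a, ⟨k, hk, ξ, s, hξ, hs, rfl⟩, hca⟩ := exists_lt_of_lt_csSup (hT_ne j) hTj
      obtain ⟨b, ⟨η, hη, rfl⟩, hcb⟩ := exists_lt_of_lt_csSup
        ((nonempty_closedBall.2 (hrknn k s)).image _) hca
      exact ⟨k, hk, ξ, s, hξ, hs, η, mem_closedBall_iff_norm.1 hη, hcb⟩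
    choose k hk ξ s hξ hs η hηξ hcu using hwit
    -- the witnesses stay in a compact ball
    have hsIcc : ∀ j, s j ∈ Set.Icc (t-1) (t+1) :=
      fun j => hIcc (s j) (le_trans (hs j) (hj1le j))
    have hηball : ∀ j, η j ∈ closedBall x (R+1) := by
      intro j
      refine mem_closedBall_iff_norm.2 ?_
      have h1 := htri (η j) (ξ j) x
      have h2 := hR (k j) (s j) (hsIcc j)
      have h3 := le_trans (hξ j) (hj1le j)
      linarith [hηξ j]
    obtain ⟨w, hwmem, φ, hφmono, hφtend⟩ :=
      (isCompact_closedBall x (R+1)).tendsto_subseq hηball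
    have hφge : ∀ m, m ≤ φ m := fun m => hφmono.le_apply
    -- the limit point is in the ball of radius r t
    have hwball : ‖w - x‖ ≤ r t := by
      refine le_of_forall_pos_le_add ?_
      intro ε hε
      obtain ⟨K₁, hK₁⟩ := hunif (ε/4) (by positivity)
      obtain ⟨δ, hδ, hδc⟩ := hcont (ε/4) (by positivity)
      obtain ⟨n₁, hn₁⟩ := exists_nat_one_div_lt hδ
      obtain ⟨n₂, hn₂⟩ := exists_nat_one_div_lt (by positivity : (0:ℝ) < ε/4)
      obtain ⟨m₁, hm₁⟩ := Metric.tendsto_atTop.1 hφtend (ε/4) (by positivity)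
      set m : ℕ := max (max m₁ K₁) (max n₁ n₂) with hmdef
      have hmm₁ : m₁ ≤ m := le_trans (le_max_left _ _) (le_max_left _ _)
      have hmK₁ : K₁ ≤ m := le_trans (le_max_right _ _) (le_max_left _ _)
      have hmn₁ : n₁ ≤ m := le_trans (le_max_left _ _) (le_max_right _ _)
      have hmn₂ : n₂ ≤ m := le_trans (le_max_right _ _) (le_max_right _ _)
      have hφm : m ≤ φ m := hφge m
      have e1 : ‖w - η (φ m)‖ < ε/4 := by
        have := hm₁ m hmm₁
        rwa [dist_comm, dist_eq_norm] at this
      have e2 : ‖η (φ m) - ξ (φ m)‖ ≤ rk (k (φ m)) (s (φ m)) := hηξ (φ m)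
      have e3 : ‖ξ (φ m) - x‖ ≤ 1 / ((φ m : ℝ) + 1) := hξ (φ m)
      have e4 : 1 / ((φ m : ℝ) + 1) ≤ 1 / ((m:ℝ) + 1) := hmono hφm
      have e5 : 1 / ((m:ℝ) + 1) ≤ 1 / ((n₂:ℝ) + 1) := hmono hmn₂
      have hkm : K₁ ≤ k (φ m) := le_trans hmK₁ (le_trans hφm (by have := hk (φ m); omega))
      have f1 : |r (s (φ m)) - rk (k (φ m)) (s (φ m))| < ε/4 :=
        hK₁ (k (φ m)) hkm (s (φ m)) (hsIcc (φ m))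
      have f2 : |s (φ m) - t| < δ := by
        refine lt_of_le_of_lt (le_trans (hs (φ m)) (le_trans e4 (hmono hmn₁))) hn₁
      have f3 : |r (s (φ m)) - r t| < ε/4 := hδc (s (φ m)) f2
      have g1 : rk (k (φ m)) (s (φ m)) ≤ r t + ε/2 := by
        have a1 := (abs_lt.1 f1).1
        have a2 := (abs_lt.1 f3).2
        linarith
      have := htri w (η (φ m)) x
      have := htri (η (φ m)) (ξ (φ m)) x
      have e6' : 1 / ((φ m : ℝ) + 1) ≤ ε/4 := le_trans (le_trans e4 e5) hn₂.le
      linarith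
    -- derive the contradiction
    have hcle : c ≤ limsupStar u w t := by
      rw [hls_u w]
      apply le_ciInf
      intro i
      have hwR : ‖w - x‖ ≤ R + 1 := le_trans hwball (by linarith)
      obtain ⟨m₁, hm₁⟩ := Metric.tendsto_atTop.1 hφtend (1 / ((i:ℝ) + 1)) (hj1 i)
      set m : ℕ := max m₁ i with hmdef
      have hφm : m ≤ φ m := hφge m
      have hmi : i ≤ φ m := le_trans (le_max_right _ _) hφm
      have e1 : ‖η (φ m) - w‖ ≤ 1 / ((i:ℝ) + 1) := by
        have := hm₁ m (le_max_left _ _)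
        rw [dist_eq_norm] at this
        exact this.le
      have e2 : |s (φ m) - t| ≤ 1 / ((i:ℝ) + 1) := le_trans (hs (φ m)) (hmono hmi)
      have e3 : i + 1 ≤ k (φ m) := le_trans (by omega) (hk (φ m))
      refine le_trans (hcu (φ m)).le (le_csSup (hS_bdd w hwR i) ?_)
      exact ⟨k (φ m), e3, η (φ m), s (φ m), e1, e2, rfl⟩
    have hfin : limsupStar u w t ≤ L := by
      refine le_csSup ?_ ⟨w, mem_closedBall_iff_norm.2 hwball, rfl⟩
      refine ⟨M, ?_⟩
      rintro _ ⟨y, hy, rfl⟩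
      have hyR : ‖y - x‖ ≤ R + 1 := le_trans (mem_closedBall_iff_norm.1 hy) (by linarith)
      refine le_trans (hu_le y hyR 0) (Real.sSup_le (hS_elem y hyR 0) hMpos.le)
    linarith
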